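/- Let s and e be composable labelled transition systems and σ ∈ (L_{s‖e}^δ)*. If s and e are mutually accepting, then σ ∈ Utraces(s ‖ e) if and only if σ↾L_s^δ ∈ Utraces(s) and σ↾L_e^δ ∈ Utraces(e). -/

import Mathlib

/-- Visible labels extended with the quiescence label `δ`. -/
inductive DLabel (A : Type) where
  | act : A → DLabel A
  | δ : DLabel A
deriving DecidableEq

/-- A labelled transition system with state type `S` and label type `A`.
`T p none p'` is an internal (τ) transition; `T p (some a) p'` a visible one.
The set of states is the whole type `S`; the initial state is `q0`. -/
structure LTS (S : Type) (A : Type) where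
  T : S → Option A → S → Prop
  I : Set A
  U : Set A
  q0 : S

namespace LTS

variable {S E F A : Type}

/-- The set of visible labels. -/
def L (s : LTS S A) : Set A := s.I ∪ s.U

/-- Well-formedness of an LTS: countably many states and labels, inputs and
outputs disjoint, and visible transitions labelled in `I ∪ U`. -/
def WF (s : LTS S A) : Prop :=
  Countable S ∧ s.I.Countable ∧ s.U.Countable ∧ Disjoint s.I s.U ∧
    ∀ p a q, s.T p (some a) q → a ∈ s.L

/-- A state is quiescent if it has no output transitions and no τ-transitions. -/
def quiescent (s : LTS S A) (p : S) : Prop :=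
  (∀ x ∈ s.U, ∀ p', ¬ s.T p (some x) p') ∧ (∀ p', ¬ s.T p none p')

/-- Single-step transition relation for δ-extended labels: `δ` is a self-loop
on quiescent states. -/
def dstep (s : LTS S A) (p : S) : DLabel A → S → Prop
  | .act a, p' => s.T p (some a) p'
  | .δ, p' => p = p' ∧ s.quiescent p

/-- `eps p p'`: `p'` is reachable from `p` by finitely many τ-transitions. -/
def eps (s : LTS S A) : S → S → Prop :=
  Relation.ReflTransGen (fun p q => s.T p none q)

/-- Weak transition relation `p ⟹σ p'` over δ-extended traces. -/
def wtrans (s : LTS S A) : S → List (DLabel A) → S → Prop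
  | p, [], p' => s.eps p p'
  | p, ℓ :: σ, p'' => ∃ p1 p2, s.eps p p1 ∧ s.dstep p1 ℓ p2 ∧ s.wtrans p2 σ p''

/-- The δ-extended label set `L^δ` as a set of `DLabel`s. -/
def Ld (s : LTS S A) : Set (DLabel A) := (DLabel.act '' s.L) ∪ {DLabel.δ}

/-- `Utraces s`: δ-extended traces of `s` (from the initial state) that never
pass through a state refusing a subsequent input of the trace. -/
def Utraces (s : LTS S A) : Set (List (DLabel A)) :=
  { σ | (∀ ℓ ∈ σ, ℓ ∈ s.Ld) ∧ (∃ p, s.wtrans s.q0 σ p) ∧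
      ∀ σ1 a σ2, σ = σ1 ++ DLabel.act a :: σ2 → a ∈ s.I →
        ∀ p, s.wtrans s.q0 σ1 p → ∃ p', s.wtrans p [DLabel.act a] p' }

/-- `out p`: the outputs (including quiescence δ) enabled in state `p`. -/
def out (s : LTS S A) (p : S) : Set (DLabel A) :=
  { x | match x with
        | .act a => a ∈ s.U ∧ ∃ p', s.T p (some a) p'
        | .δ => s.quiescent p }

/-- `out` of a set of states. -/
def outSet (s : LTS S A) (P : Set S) : Set (DLabel A) := ⋃ p ∈ P, s.out p

/-- `inp p`: the inputs weakly enabled in state `p`. -/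
def inp (s : LTS S A) (p : S) : Set A :=
  { a | a ∈ s.I ∧ ∃ p', s.wtrans p [DLabel.act a] p' }

/-- The states reached from the initial state after trace `σ`. -/
def after (s : LTS S A) (σ : List (DLabel A)) : Set S :=
  { p' | s.wtrans s.q0 σ p' }

/-- Input-enabledness: every input is weakly enabled in every state. -/
def IOTS (s : LTS S A) : Prop :=
  ∀ q : S, ∀ a ∈ s.I, ∃ q', s.wtrans q [DLabel.act a] q'

/-- Two LTSs are composable iff their output sets are disjoint. -/
def Composable (s : LTS S A) (e : LTS E A) : Prop := Disjoint s.U e.U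

/-- Parallel composition of two LTSs: synchronisation on shared labels,
interleaving on non-shared labels and τ. -/
def par (s : LTS S A) (e : LTS E A) : LTS (S × E) A where
  I := (s.I \ e.U) ∪ (e.I \ s.U)
  U := s.U ∪ e.U
  q0 := (s.q0, e.q0)
  T := fun x ℓ y =>
    (s.T x.1 ℓ y.1 ∧ y.2 = x.2 ∧ (ℓ = none ∨ ∃ a ∈ s.L, ℓ = some a) ∧
      ∀ a ∈ e.L, ℓ ≠ some a) ∨
    (e.T x.2 ℓ y.2 ∧ y.1 = x.1 ∧ (ℓ = none ∨ ∃ a ∈ e.L, ℓ = some a) ∧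
      ∀ a ∈ s.L, ℓ ≠ some a) ∨
    (∃ a ∈ s.L ∩ e.L, ℓ = some a ∧ s.T x.1 (some a) y.1 ∧ e.T x.2 (some a) y.2)

/-- The uioco implementation relation. -/
def uioco (i : LTS E A) (s : LTS S A) : Prop :=
  ∀ σ ∈ s.Utraces, i.outSet (i.after σ) ⊆ s.outSet (s.after σ)

/-- `s.Accepts e`: along every Utrace of `s ‖ e`, every output of `e` that is an
input label of `s` is actually accepted by `s` and is an output of `e`. -/
def Accepts (s : LTS S A) (e : LTS E A) : Prop :=
  ∀ σ ∈ (s.par e).Utraces, ∀ p q, (s.par e).wtrans (s.par e).q0 σ (p, q) →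
    ∀ a, DLabel.act a ∈ e.out q → a ∈ s.I → a ∈ s.inp p ∧ a ∈ e.U

/-- Mutual acceptance. -/
def MutuallyAccepts (s : LTS S A) (e : LTS E A) : Prop := s.Accepts e ∧ e.Accepts s

/-- Isomorphism of LTSs: equal label sets and a bijection on states preserving
the initial state and all transitions (including τ and δ). -/
def Isomorphic (s : LTS S A) (s' : LTS E A) : Prop :=
  s.I = s'.I ∧ s.U = s'.U ∧ ∃ f : S ≃ E, f s.q0 = s'.q0 ∧
    (∀ p p' ℓ, s.T p ℓ p' ↔ s'.T (f p) ℓ (f p')) ∧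
    (∀ p p', s.dstep p DLabel.δ p' ↔ s'.dstep (f p) DLabel.δ (f p'))

open Classical in
/-- Projection of a trace onto a set of labels. -/
noncomputable def proj : List (DLabel A) → Set (DLabel A) → List (DLabel A)
  | [], _ => []
  | ℓ :: σ, 𝓛 => if ℓ ∈ 𝓛 then ℓ :: proj σ 𝓛 else proj σ 𝓛

end LTS

namespace LTS

open Relation

variable {S E A : Type}

@[simp] lemma wtrans_nil {s : LTS S A} {p p' : S} : s.wtrans p [] p' ↔ s.eps p p' := Iff.rfl

@[simp] lemma wtrans_cons {s : LTS S A} {p p' : S} {ℓ : DLabel A} {σ : List (DLabel A)} :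
    s.wtrans p (ℓ :: σ) p' ↔ ∃ p1 p2, s.eps p p1 ∧ s.dstep p1 ℓ p2 ∧ s.wtrans p2 σ p' := Iff.rfl

lemma wtrans_eps_left {s : LTS S A} {p q r : S} {σ : List (DLabel A)}
    (h : s.eps p q) (h2 : s.wtrans q σ r) : s.wtrans p σ r := by
  cases σ with
  | nil => exact h.trans h2
  | cons ℓ σ => obtain ⟨p1, p2, h1, hst, hw⟩ := h2; exact ⟨p1, p2, h.trans h1, hst, hw⟩

lemma wtrans_eps_right {s : LTS S A} {σ : List (DLabel A)} :
    ∀ {p q r : S}, s.wtrans p σ q → s.eps q r → s.wtrans p σ r := by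
  induction σ with
  | nil => exact fun h h2 => h.trans h2
  | cons ℓ σ ih =>
    rintro p q r ⟨p1, p2, h1, hst, hw⟩ h2
    exact ⟨p1, p2, h1, hst, ih hw h2⟩

lemma wtrans_append {s : LTS S A} : ∀ {σ1 σ2 : List (DLabel A)} {p r : S},
    s.wtrans p (σ1 ++ σ2) r ↔ ∃ m, s.wtrans p σ1 m ∧ s.wtrans m σ2 r := by
  intro σ1
  induction σ1 with
  | nil =>
    intro σ2 p r
    constructor
    · exact fun h => ⟨p, ReflTransGen.refl, h⟩
    · rintro ⟨m, h1, h2⟩; exact wtrans_eps_left h1 h2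
  | cons ℓ σ1 ih =>
    intro σ2 p r
    constructor
    · rintro ⟨p1, p2, h1, hst, hw⟩
      obtain ⟨m, hm1, hm2⟩ := ih.mp hw
      exact ⟨m, ⟨p1, p2, h1, hst, hm1⟩, hm2⟩
    · rintro ⟨m, ⟨p1, p2, h1, hst, hw⟩, h2⟩
      exact ⟨p1, p2, h1, hst, ih.mpr ⟨m, hw, h2⟩⟩

lemma proj_nil {𝓛 : Set (DLabel A)} : proj [] 𝓛 = [] := by simp [proj]

lemma proj_cons_of_mem {𝓛 : Set (DLabel A)} {ℓ : DLabel A} {σ : List (DLabel A)}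
    (h : ℓ ∈ 𝓛) : proj (ℓ :: σ) 𝓛 = ℓ :: proj σ 𝓛 := by simp [proj, h]

lemma proj_cons_of_not_mem {𝓛 : Set (DLabel A)} {ℓ : DLabel A} {σ : List (DLabel A)}
    (h : ℓ ∉ 𝓛) : proj (ℓ :: σ) 𝓛 = proj σ 𝓛 := by simp [proj, h]

lemma proj_append {𝓛 : Set (DLabel A)} : ∀ (σ1 σ2 : List (DLabel A)),
    proj (σ1 ++ σ2) 𝓛 = proj σ1 𝓛 ++ proj σ2 𝓛 := by
  intro σ1
  induction σ1 with
  | nil => simp [proj]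
  | cons ℓ σ1 ih =>
    intro σ2
    by_cases h : ℓ ∈ 𝓛
    · simp [proj_cons_of_mem h, ih]
    · simp [proj_cons_of_not_mem h, ih]

lemma mem_proj {𝓛 : Set (DLabel A)} {ℓ : DLabel A} : ∀ {σ : List (DLabel A)},
    ℓ ∈ proj σ 𝓛 → ℓ ∈ σ ∧ ℓ ∈ 𝓛 := by
  intro σ
  induction σ with
  | nil => simp [proj]
  | cons x σ ih =>
    intro h
    by_cases hx : x ∈ 𝓛
    · rw [proj_cons_of_mem hx] at h
      rcases List.mem_cons.mp h with h | h
      · subst h; exact ⟨List.mem_cons_self, hx⟩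
      · exact ⟨List.mem_cons_of_mem _ (ih h).1, (ih h).2⟩
    · rw [proj_cons_of_not_mem hx] at h
      exact ⟨List.mem_cons_of_mem _ (ih h).1, (ih h).2⟩

lemma proj_split {𝓛 : Set (DLabel A)} {ℓ : DLabel A} (hℓ : ℓ ∈ 𝓛) :
    ∀ {σ σ1 σ2 : List (DLabel A)}, proj σ 𝓛 = σ1 ++ ℓ :: σ2 →
      ∃ τ1 τ2, σ = τ1 ++ ℓ :: τ2 ∧ proj τ1 𝓛 = σ1 := by
  intro σ
  induction σ with
  | nil => intro σ1 σ2 h; rw [proj_nil] at h; exact absurd h (by simp)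
  | cons x σ ih =>
    intro σ1 σ2 h
    by_cases hx : x ∈ 𝓛
    · rw [proj_cons_of_mem hx] at h
      cases σ1 with
      | nil =>
        simp at h
        exact ⟨[], σ, by rw [h.1]; rfl, proj_nil⟩
      | cons y σ1 =>
        simp at h
        obtain ⟨τ1, τ2, hσ, hp⟩ := ih h.2
        exact ⟨x :: τ1, τ2, by rw [hσ]; rfl, by rw [proj_cons_of_mem hx, hp, h.1]⟩
    · rw [proj_cons_of_not_mem hx] at h
      obtain ⟨τ1, τ2, hσ, hp⟩ := ih h
      exact ⟨x :: τ1, τ2, by rw [hσ]; rfl, by rw [proj_cons_of_not_mem hx, hp]⟩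

end LTS

namespace LTS

open Relation

variable {S E A : Type}

lemma L_par {s : LTS S A} {e : LTS E A} : (s.par e).L = s.L ∪ e.L := by
  ext x; simp [L, par]; tauto

lemma act_mem_Ld {s : LTS S A} {a : A} : DLabel.act a ∈ s.Ld ↔ a ∈ s.L := by
  simp [Ld]

lemma delta_mem_Ld {s : LTS S A} : DLabel.δ ∈ s.Ld := by simp [Ld]

lemma Ld_par {s : LTS S A} {e : LTS E A} : (s.par e).Ld = s.Ld ∪ e.Ld := by
  ext ℓ
  cases ℓ with
  | act a => simp [Ld, L_par]
  | δ => simp [Ld]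

lemma par_tau_fst {s : LTS S A} {e : LTS E A} {p p' : S} {q : E}
    (h : s.T p none p') : (s.par e).T (p, q) none (p', q) :=
  Or.inl ⟨h, rfl, Or.inl rfl, fun a _ h' => by cases h'⟩

lemma par_tau_snd {s : LTS S A} {e : LTS E A} {q q' : E} {p : S}
    (h : e.T q none q') : (s.par e).T (p, q) none (p, q') :=
  Or.inr (Or.inl ⟨h, rfl, Or.inl rfl, fun a _ h' => by cases h'⟩)

lemma par_act_fst {s : LTS S A} {e : LTS E A} {p p' : S} {q : E} {a : A}
    (h : s.T p (some a) p') (hs : a ∈ s.L) (hne : a ∉ e.L) :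
    (s.par e).T (p, q) (some a) (p', q) :=
  Or.inl ⟨h, rfl, Or.inr ⟨a, hs, rfl⟩, fun b hb h' => by
    injection h' with h2; subst h2; exact hne hb⟩

lemma par_act_snd {s : LTS S A} {e : LTS E A} {q q' : E} {p : S} {a : A}
    (h : e.T q (some a) q') (hs : a ∈ e.L) (hne : a ∉ s.L) :
    (s.par e).T (p, q) (some a) (p, q') :=
  Or.inr (Or.inl ⟨h, rfl, Or.inr ⟨a, hs, rfl⟩, fun b hb h' => by
    injection h' with h2; subst h2; exact hne hb⟩)

lemma par_act_sync {s : LTS S A} {e : LTS E A} {p p' : S} {q q' : E} {a : A}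
    (h1 : s.T p (some a) p') (h2 : e.T q (some a) q') (hs : a ∈ s.L) (he : a ∈ e.L) :
    (s.par e).T (p, q) (some a) (p', q') :=
  Or.inr (Or.inr ⟨a, ⟨hs, he⟩, rfl, h1, h2⟩)

lemma par_eps_fst {s : LTS S A} {e : LTS E A} {p p' : S} (q : E)
    (h : s.eps p p') : (s.par e).eps (p, q) (p', q) :=
  ReflTransGen.lift (fun x => (x, q)) (fun _ _ h => par_tau_fst h) _ _ h

lemma par_eps_snd {s : LTS S A} {e : LTS E A} {q q' : E} (p : S)
    (h : e.eps q q') : (s.par e).eps (p, q) (p, q') :=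
  ReflTransGen.lift (fun x => (p, x)) (fun _ _ h => par_tau_snd h) _ _ h

lemma par_eps_mk {s : LTS S A} {e : LTS E A} {p p' : S} {q q' : E}
    (h1 : s.eps p p') (h2 : e.eps q q') : (s.par e).eps (p, q) (p', q') :=
  (par_eps_fst q h1).trans (par_eps_snd p' h2)

lemma par_eps_decomp {s : LTS S A} {e : LTS E A} {x y : S × E}
    (h : (s.par e).eps x y) : s.eps x.1 y.1 ∧ e.eps x.2 y.2 := by
  induction h with
  | refl => exact ⟨ReflTransGen.refl, ReflTransGen.refl⟩
  | tail h1 h2 ih =>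
    rcases h2 with ⟨hT, heq, _, _⟩ | ⟨hT, heq, _, _⟩ | ⟨a, _, habs, _⟩
    · exact ⟨ih.1.tail hT, heq ▸ ih.2⟩
    · exact ⟨heq ▸ ih.1, ih.2.tail hT⟩
    · cases habs

lemma quiescent_par_mk {s : LTS S A} {e : LTS E A} {p : S} {q : E}
    (hp : s.quiescent p) (hq : e.quiescent q) : (s.par e).quiescent (p, q) := by
  constructor
  · rintro x hx ⟨p', q'⟩ hT
    rcases hT with ⟨hT, _, _, hne⟩ | ⟨hT, _, _, hne⟩ | ⟨a, ⟨has, hae⟩, heq, hTs, hTe⟩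
    · rcases hx with hx | hx
      · exact hp.1 x hx p' hT
      · exact hne x (Or.inr hx) rfl
    · rcases hx with hx | hx
      · exact hne x (Or.inr hx) rfl
      · exact hq.1 x hx q' hT
    · cases heq
      rcases hx with hx | hx
      · exact hp.1 x hx p' hTs
      · exact hq.1 x hx q' hTe
  · rintro ⟨p', q'⟩ hT
    rcases hT with ⟨hT, _, _, _⟩ | ⟨hT, _, _, _⟩ | ⟨a, _, habs, _⟩
    · exact hp.2 p' hT
    · exact hq.2 q' hT
    · cases habs

lemma eps_eq_of_no_tau {s : LTS S A} {p q : S}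
    (hp : ∀ r, ¬ s.T p none r) (h : s.eps p q) : p = q := by
  rcases h.cases_head with h | ⟨c, hc, _⟩
  · exact h
  · exact absurd hc (hp c)

lemma quiescent_no_tau {s : LTS S A} {p : S} (h : s.quiescent p) :
    ∀ r, ¬ s.T p none r := h.2

end LTS

namespace LTS

open Relation

variable {S E A : Type}

lemma par_T_swap {s : LTS S A} {e : LTS E A} {p p' : S} {q q' : E} {ℓ : Option A} :
    (s.par e).T (p, q) ℓ (p', q') ↔ (e.par s).T (q, p) ℓ (q', p') := by
  constructor
  · rintro (⟨h1, h2, h3, h4⟩ | ⟨h1, h2, h3, h4⟩ | ⟨a, ⟨ha1, ha2⟩, h1, h2, h3⟩)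
    · exact Or.inr (Or.inl ⟨h1, h2, h3, h4⟩)
    · exact Or.inl ⟨h1, h2, h3, h4⟩
    · exact Or.inr (Or.inr ⟨a, ⟨ha2, ha1⟩, h1, h3, h2⟩)
  · rintro (⟨h1, h2, h3, h4⟩ | ⟨h1, h2, h3, h4⟩ | ⟨a, ⟨ha1, ha2⟩, h1, h2, h3⟩)
    · exact Or.inr (Or.inl ⟨h1, h2, h3, h4⟩)
    · exact Or.inl ⟨h1, h2, h3, h4⟩
    · exact Or.inr (Or.inr ⟨a, ⟨ha2, ha1⟩, h1, h3, h2⟩)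

lemma par_U_swap {s : LTS S A} {e : LTS E A} : (s.par e).U = (e.par s).U :=
  Set.union_comm _ _

lemma par_I_swap {s : LTS S A} {e : LTS E A} : (s.par e).I = (e.par s).I :=
  Set.union_comm _ _

lemma par_eps_swap {s : LTS S A} {e : LTS E A} {x y : S × E} :
    (s.par e).eps x y ↔ (e.par s).eps (x.2, x.1) (y.2, y.1) := by
  constructor
  · intro h
    refine ReflTransGen.lift (fun z : S × E => (z.2, z.1)) ?_ _ _ h
    rintro ⟨a1, a2⟩ ⟨b1, b2⟩ hT
    exact par_T_swap.mp hT
  · intro h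
    refine ReflTransGen.lift (fun z : E × S => (z.2, z.1)) ?_ _ _ h
    rintro ⟨a1, a2⟩ ⟨b1, b2⟩ hT
    exact par_T_swap.mpr hT

lemma quiescent_swap {s : LTS S A} {e : LTS E A} {p : S} {q : E} :
    (s.par e).quiescent (p, q) ↔ (e.par s).quiescent (q, p) := by
  constructor <;> intro h <;> constructor
  · rintro x hx ⟨q', p'⟩ hT
    exact h.1 x (par_U_swap ▸ hx) (p', q') (par_T_swap.mpr hT)
  · rintro ⟨q', p'⟩ hT
    exact h.2 (p', q') (par_T_swap.mpr hT)
  · rintro x hx ⟨p', q'⟩ hT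
    exact h.1 x (par_U_swap ▸ hx) (q', p') (par_T_swap.mp hT)
  · rintro ⟨p', q'⟩ hT
    exact h.2 (q', p') (par_T_swap.mp hT)

lemma par_dstep_swap {s : LTS S A} {e : LTS E A} {x y : S × E} {ℓ : DLabel A} :
    (s.par e).dstep x ℓ y ↔ (e.par s).dstep (x.2, x.1) ℓ (y.2, y.1) := by
  obtain ⟨x1, x2⟩ := x; obtain ⟨y1, y2⟩ := y
  cases ℓ with
  | act a => exact par_T_swap
  | δ =>
    show (x1, x2) = (y1, y2) ∧ _ ↔ (x2, x1) = (y2, y1) ∧ _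
    rw [Prod.ext_iff, Prod.ext_iff, quiescent_swap]
    tauto

lemma par_wtrans_swap {s : LTS S A} {e : LTS E A} {σ : List (DLabel A)} :
    ∀ {x y : S × E}, (s.par e).wtrans x σ y ↔ (e.par s).wtrans (x.2, x.1) σ (y.2, y.1) := by
  induction σ with
  | nil => intro x y; exact par_eps_swap
  | cons ℓ σ ih =>
    intro x y
    constructor
    · rintro ⟨p1, p2, h1, h2, h3⟩
      exact ⟨(p1.2, p1.1), (p2.2, p2.1), par_eps_swap.mp h1, par_dstep_swap.mp h2, ih.mp h3⟩
    · rintro ⟨p1, p2, h1, h2, h3⟩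
      refine ⟨(p1.2, p1.1), (p2.2, p2.1), ?_, ?_, ?_⟩
      · exact par_eps_swap.mpr h1
      · exact par_dstep_swap.mpr h2
      · exact ih.mpr h3

lemma Ld_swap {s : LTS S A} {e : LTS E A} : (s.par e).Ld = (e.par s).Ld := by
  rw [Ld_par, Ld_par, Set.union_comm]

lemma Utraces_swap {s : LTS S A} {e : LTS E A} {σ : List (DLabel A)} :
    σ ∈ (s.par e).Utraces ↔ σ ∈ (e.par s).Utraces := by
  have hq0 : (s.par e).q0 = ((e.par s).q0.2, (e.par s).q0.1) := rfl
  constructor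
  · rintro ⟨h1, ⟨⟨P, Q⟩, h2⟩, h3⟩
    refine ⟨fun ℓ hℓ => Ld_swap ▸ h1 ℓ hℓ, ⟨(Q, P), ?_⟩, ?_⟩
    · exact par_wtrans_swap.mp (hq0 ▸ h2)
    · intro σ1 a σ2 hdec ha ⟨Q1, P1⟩ hw
      obtain ⟨⟨P2, Q2⟩, hw2⟩ := h3 σ1 a σ2 hdec (par_I_swap ▸ ha) (P1, Q1)
        (par_wtrans_swap.mpr hw)
      exact ⟨(Q2, P2), par_wtrans_swap.mp hw2⟩
  · rintro ⟨h1, ⟨⟨Q, P⟩, h2⟩, h3⟩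
    refine ⟨fun ℓ hℓ => Ld_swap ▸ h1 ℓ hℓ, ⟨(P, Q), ?_⟩, ?_⟩
    · exact par_wtrans_swap.mpr h2
    · intro σ1 a σ2 hdec ha ⟨P1, Q1⟩ hw
      obtain ⟨⟨Q2, P2⟩, hw2⟩ := h3 σ1 a σ2 hdec (par_I_swap ▸ ha) (Q1, P1)
        (par_wtrans_swap.mp hw)
      exact ⟨(P2, Q2), par_wtrans_swap.mpr hw2⟩

lemma Utraces_prefix {s : LTS S A} {σ1 σ2 : List (DLabel A)}
    (h : σ1 ++ σ2 ∈ s.Utraces) : σ1 ∈ s.Utraces := by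
  obtain ⟨h1, ⟨P, h2⟩, h3⟩ := h
  refine ⟨fun ℓ hℓ => h1 ℓ (List.mem_append_left _ hℓ), ?_, ?_⟩
  · obtain ⟨m, hm, _⟩ := wtrans_append.mp h2
    exact ⟨m, hm⟩
  · intro τ1 a τ2 hdec ha p hw
    exact h3 τ1 a (τ2 ++ σ2) (by rw [hdec]; simp) ha p hw

end LTS

namespace LTS

open Relation

variable {S E A : Type}

lemma compose_par {s : LTS S A} {e : LTS E A} :
    ∀ {σ : List (DLabel A)} {p P : S} {q Q : E},
      (∀ ℓ ∈ σ, ℓ ∈ (s.par e).Ld) →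
      s.wtrans p (proj σ s.Ld) P → e.wtrans q (proj σ e.Ld) Q →
      (s.par e).wtrans (p, q) σ (P, Q) := by
  intro σ
  induction σ with
  | nil =>
    intro p P q Q _ hws hwe
    rw [proj_nil] at hws hwe
    exact par_eps_mk hws hwe
  | cons ℓ σ ih =>
    intro p P q Q hσ hws hwe
    have hℓ : ℓ ∈ (s.par e).Ld := hσ ℓ (List.mem_cons_self)
    have hσ' : ∀ x ∈ σ, x ∈ (s.par e).Ld := fun x hx => hσ x (List.mem_cons_of_mem _ hx)
    cases ℓ with
    | δ =>
      rw [proj_cons_of_mem delta_mem_Ld] at hws hwe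
      obtain ⟨p1, p2, hep, ⟨heqp, hqp⟩, hws'⟩ := hws
      obtain ⟨q1, q2, heq, ⟨heqq, hqq⟩, hwe'⟩ := hwe
      subst heqp; subst heqq
      exact ⟨(p1, q1), (p1, q1), par_eps_mk hep heq,
        ⟨rfl, quiescent_par_mk hqp hqq⟩, ih hσ' hws' hwe'⟩
    | act a =>
      have haL : a ∈ s.L ∪ e.L := by
        rw [← L_par]
        rcases (Ld_par ▸ hℓ : DLabel.act a ∈ s.Ld ∪ e.Ld) with h | h
        · rw [L_par]; exact Or.inl (act_mem_Ld.mp h)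
        · rw [L_par]; exact Or.inr (act_mem_Ld.mp h)
      by_cases has : a ∈ s.L <;> by_cases hae : a ∈ e.L
      · rw [proj_cons_of_mem (act_mem_Ld.mpr has)] at hws
        rw [proj_cons_of_mem (act_mem_Ld.mpr hae)] at hwe
        obtain ⟨p1, p2, hep, hTs, hws'⟩ := hws
        obtain ⟨q1, q2, heq, hTe, hwe'⟩ := hwe
        exact ⟨(p1, q1), (p2, q2), par_eps_mk hep heq,
          par_act_sync hTs hTe has hae, ih hσ' hws' hwe'⟩
      · rw [proj_cons_of_mem (act_mem_Ld.mpr has)] at hws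
        rw [proj_cons_of_not_mem (fun h => hae (act_mem_Ld.mp h))] at hwe
        obtain ⟨p1, p2, hep, hTs, hws'⟩ := hws
        exact ⟨(p1, q), (p2, q), par_eps_fst q hep,
          par_act_fst hTs has hae, ih hσ' hws' hwe⟩
      · rw [proj_cons_of_not_mem (fun h => has (act_mem_Ld.mp h))] at hws
        rw [proj_cons_of_mem (act_mem_Ld.mpr hae)] at hwe
        obtain ⟨q1, q2, heq, hTe, hwe'⟩ := hwe
        exact ⟨(p, q1), (p, q2), par_eps_snd p heq,
          par_act_snd hTe hae has, ih hσ' hws hwe'⟩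
      · rcases haL with h | h
        · exact absurd h has
        · exact absurd h hae

end LTS

namespace LTS

open Relation

variable {S E A : Type}

lemma quiescent_decomp {s : LTS S A} {e : LTS E A} (hs : s.WF) (he : e.WF)
    (hc : Composable s e) (hma : s.MutuallyAccepts e) {σ : List (DLabel A)} {P : S} {Q : E}
    (hU : σ ∈ (s.par e).Utraces)
    (hrun : (s.par e).wtrans (s.par e).q0 σ (P, Q))
    (hq : (s.par e).quiescent (P, Q)) : s.quiescent P ∧ e.quiescent Q := by
  have hPt : ∀ r, ¬ s.T P none r := fun r hT => hq.2 (r, Q) (par_tau_fst hT)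
  have hQt : ∀ r, ¬ e.T Q none r := fun r hT => hq.2 (P, r) (par_tau_snd hT)
  constructor
  · refine ⟨?_, hPt⟩
    intro x hx P' hT
    have hxLs : x ∈ s.L := hs.2.2.2.2 P x P' hT
    by_cases hxe : x ∈ e.L
    · -- x is an input of e; use e.Accepts s
      have hxIe : x ∈ e.I := by
        rcases hxe with h | h
        · exact h
        · exact absurd hx (Set.disjoint_left.mp hc.symm h)
      have hout : DLabel.act x ∈ s.out P := ⟨hx, P', hT⟩
      obtain ⟨⟨_, q', hqw⟩, _⟩ := hma.2 σ (Utraces_swap.mp hU) Q P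
        (par_wtrans_swap.mp hrun) x hout hxIe
      obtain ⟨q1, q2, heq, hTe, _⟩ := hqw
      have : Q = q1 := eps_eq_of_no_tau hQt heq
      subst this
      exact hq.1 x (Or.inl hx) (P', q2) (par_act_sync hT hTe hxLs hxe)
    · exact hq.1 x (Or.inl hx) (P', Q) (par_act_fst hT hxLs hxe)
  · refine ⟨?_, hQt⟩
    intro x hx Q' hT
    have hxLe : x ∈ e.L := he.2.2.2.2 Q x Q' hT
    by_cases hxs : x ∈ s.L
    · have hxIs : x ∈ s.I := by
        rcases hxs with h | h
        · exact h
        · exact absurd hx (Set.disjoint_left.mp hc h)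
      have hout : DLabel.act x ∈ e.out Q := ⟨hx, Q', hT⟩
      obtain ⟨⟨_, p', hpw⟩, _⟩ := hma.1 σ hU P Q hrun x hout hxIs
      obtain ⟨p1, p2, hep, hTs, _⟩ := hpw
      have : P = p1 := eps_eq_of_no_tau hPt hep
      subst this
      exact hq.1 x (Or.inr hx) (p2, Q') (par_act_sync hTs hT hxs hxLe)
    · exact hq.1 x (Or.inr hx) (P, Q') (par_act_snd hT hxLe hxs)

lemma decompose_par {s : LTS S A} {e : LTS E A} (hs : s.WF) (he : e.WF)
    (hc : Composable s e) (hma : s.MutuallyAccepts e) :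
    ∀ {σ : List (DLabel A)}, σ ∈ (s.par e).Utraces →
      ∀ {P : S} {Q : E}, (s.par e).wtrans (s.par e).q0 σ (P, Q) →
        s.wtrans s.q0 (proj σ s.Ld) P ∧ e.wtrans e.q0 (proj σ e.Ld) Q := by
  intro σ
  induction σ using List.reverseRecOn with
  | nil =>
    intro _ P Q h
    rw [proj_nil, proj_nil]
    exact par_eps_decomp h
  | append_singleton σ' ℓ ih =>
    intro hU P Q h
    have hU' : σ' ∈ (s.par e).Utraces := Utraces_prefix hU
    obtain ⟨mid, hmid, hstep⟩ := wtrans_append.mp h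
    obtain ⟨m1, m2, he1, hd, he2⟩ := hstep
    cases ℓ with
    | δ =>
      obtain ⟨heq, hqq⟩ := hd
      subst heq
      obtain ⟨heqP, heqQ⟩ : m1.1 = P ∧ m1.2 = Q := by
        have := eps_eq_of_no_tau (fun r hr => hqq.2 r hr) he2
        exact ⟨congrArg Prod.fst this, congrArg Prod.snd this⟩
      have hrun' : (s.par e).wtrans (s.par e).q0 σ' (P, Q) := by
        have := wtrans_eps_right hmid he1
        rwa [show m1 = (P, Q) from Prod.ext heqP heqQ] at this
      have hqq' : (s.par e).quiescent (P, Q) := by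
        rwa [show m1 = (P, Q) from Prod.ext heqP heqQ] at hqq
      obtain ⟨hqs, hqe⟩ := quiescent_decomp hs he hc hma hU' hrun' hqq'
      obtain ⟨hws, hwe⟩ := ih hU' hrun'
      constructor
      · rw [proj_append, proj_cons_of_mem delta_mem_Ld, proj_nil]
        exact wtrans_append.mpr ⟨P, hws, P, P, ReflTransGen.refl, ⟨rfl, hqs⟩, ReflTransGen.refl⟩
      · rw [proj_append, proj_cons_of_mem delta_mem_Ld, proj_nil]
        exact wtrans_append.mpr ⟨Q, hwe, Q, Q, ReflTransGen.refl, ⟨rfl, hqe⟩, ReflTransGen.refl⟩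
    | act a =>
      have hrun1 : (s.par e).wtrans (s.par e).q0 σ' m1 := wtrans_eps_right hmid he1
      obtain ⟨hws, hwe⟩ : s.wtrans s.q0 (proj σ' s.Ld) m1.1 ∧
          e.wtrans e.q0 (proj σ' e.Ld) m1.2 := ih hU' hrun1
      obtain ⟨hes, hee⟩ := par_eps_decomp he2
      rcases hd with ⟨hT, heq, hin, hne⟩ | ⟨hT, heq, hin, hne⟩ | ⟨b, ⟨hbs, hbe⟩, heqb, hTs, hTe⟩
      · -- s only
        have haLs : a ∈ s.L := by
          rcases hin with h | ⟨b, hb, hab⟩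
          · cases h
          · injection hab with h2; subst h2; exact hb
        have haLe : a ∉ e.L := fun h => hne a h rfl
        constructor
        · rw [proj_append, proj_cons_of_mem (act_mem_Ld.mpr haLs), proj_nil]
          exact wtrans_append.mpr ⟨m1.1, hws, m1.1, m2.1, ReflTransGen.refl, hT, hes⟩
        · rw [proj_append, proj_cons_of_not_mem (fun h => haLe (act_mem_Ld.mp h)),
            proj_nil, List.append_nil]
          exact wtrans_eps_right hwe (heq ▸ hee)
      · -- e only
        have haLe : a ∈ e.L := by
          rcases hin with h | ⟨b, hb, hab⟩
          · cases h
          · injection hab with h2; subst h2; exact hb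
        have haLs : a ∉ s.L := fun h => hne a h rfl
        constructor
        · rw [proj_append, proj_cons_of_not_mem (fun h => haLs (act_mem_Ld.mp h)),
            proj_nil, List.append_nil]
          exact wtrans_eps_right hws (heq ▸ hes)
        · rw [proj_append, proj_cons_of_mem (act_mem_Ld.mpr haLe), proj_nil]
          exact wtrans_append.mpr ⟨m1.2, hwe, m1.2, m2.2, ReflTransGen.refl, hT, hee⟩
      · -- sync
        injection heqb with h2
        subst h2
        constructor
        · rw [proj_append, proj_cons_of_mem (act_mem_Ld.mpr hbs), proj_nil]
          exact wtrans_append.mpr ⟨m1.1, hws, m1.1, m2.1, ReflTransGen.refl, hTs, hes⟩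
        · rw [proj_append, proj_cons_of_mem (act_mem_Ld.mpr hbe), proj_nil]
          exact wtrans_append.mpr ⟨m1.2, hwe, m1.2, m2.2, ReflTransGen.refl, hTe, hee⟩

end LTS

namespace LTS

open Relation

variable {S E A : Type}

lemma utraces_proj_left {s : LTS S A} {e : LTS E A} (hs : s.WF) (he : e.WF)
    (hc : Composable s e) (hma : s.MutuallyAccepts e) {σ : List (DLabel A)}
    (hσ : ∀ x ∈ σ, x ∈ (s.par e).Ld) (hU : σ ∈ (s.par e).Utraces) :
    proj σ s.Ld ∈ s.Utraces := by
  refine ⟨fun ℓ hℓ => (mem_proj hℓ).2, ?_, ?_⟩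
  · obtain ⟨⟨F1, F2⟩, hF⟩ := hU.2.1
    exact ⟨F1, (decompose_par hs he hc hma hU hF).1⟩
  · intro σ1 a σ2 hsplit haI P hP
    have haLd : DLabel.act a ∈ s.Ld := act_mem_Ld.mpr (Or.inl haI)
    obtain ⟨τ1, τ2, hστ, hτp⟩ := proj_split haLd hsplit
    have hUτ1 : τ1 ∈ (s.par e).Utraces := Utraces_prefix (hστ ▸ hU)
    obtain ⟨F, hF⟩ := hU.2.1
    rw [hστ] at hF
    obtain ⟨mid, hmid, hstep⟩ := wtrans_append.mp hF
    obtain ⟨⟨m11, m12⟩, m2, he1, hd, _⟩ := hstep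
    have hrun1 : (s.par e).wtrans (s.par e).q0 τ1 (m11, m12) := wtrans_eps_right hmid he1
    have hwe3 : e.wtrans e.q0 (proj τ1 e.Ld) m12 :=
      (decompose_par hs he hc hma hUτ1 hrun1).2
    have hτlab : ∀ x ∈ τ1, x ∈ (s.par e).Ld := by
      intro x hx
      exact hσ x (by rw [hστ]; exact List.mem_append_left _ hx)
    have hP' : s.wtrans s.q0 (proj τ1 s.Ld) P := by rw [hτp]; exact hP
    have hcomp : (s.par e).wtrans (s.par e).q0 τ1 (P, m12) :=
      compose_par hτlab hP' hwe3
    by_cases haU : a ∈ e.U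
    · have haLe : a ∈ e.L := Or.inr haU
      have hTe : ∃ q', e.T m12 (some a) q' := by
        rcases hd with ⟨_, _, _, hne⟩ | ⟨hT, _, _, _⟩ | ⟨b, _, heqb, _, hTe⟩
        · exact absurd rfl (hne a haLe)
        · exact ⟨m2.2, hT⟩
        · injection heqb with h2; subst h2; exact ⟨m2.2, hTe⟩
      obtain ⟨q', hq'⟩ := hTe
      have hout : DLabel.act a ∈ e.out m12 := ⟨haU, q', hq'⟩
      obtain ⟨⟨_, p', hpw⟩, _⟩ := hma.1 τ1 hUτ1 P m12 hcomp a hout haI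
      exact ⟨p', hpw⟩
    · have haIpar : a ∈ (s.par e).I := Or.inl ⟨haI, haU⟩
      obtain ⟨F', hF'⟩ := hU.2.2 τ1 a τ2 hστ haIpar (P, m12) hcomp
      obtain ⟨n1, n2, hne1, hnd, _⟩ := hF'
      have hepsP : s.eps P n1.1 := (par_eps_decomp hne1).1
      have hTs : ∃ p2, s.T n1.1 (some a) p2 := by
        rcases hnd with ⟨hT, _, _, _⟩ | ⟨_, _, _, hne⟩ | ⟨b, _, heqb, hTs, _⟩
        · exact ⟨n2.1, hT⟩
        · exact absurd rfl (hne a (Or.inl haI))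
        · injection heqb with h2; subst h2; exact ⟨n2.1, hTs⟩
      obtain ⟨p2, hT⟩ := hTs
      exact ⟨p2, n1.1, p2, hepsP, hT, ReflTransGen.refl⟩

end LTS

/-- for mutually accepting composable `s`, `e`, a trace is a
Utrace of `s ‖ e` iff its projections are Utraces of the components. -/
theorem utraces_par_iff_of_mutuallyAccepts {S E A : Type} (s : LTS S A) (e : LTS E A)
    (hs : s.WF) (he : e.WF) (hc : LTS.Composable s e)
    (σ : List (DLabel A)) (hσ : ∀ x ∈ σ, x ∈ (s.par e).Ld)
    (hma : s.MutuallyAccepts e) :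
    σ ∈ (s.par e).Utraces ↔
      LTS.proj σ s.Ld ∈ s.Utraces ∧ LTS.proj σ e.Ld ∈ e.Utraces := by
  constructor
  · intro hU
    exact ⟨LTS.utraces_proj_left hs he hc hma hσ hU,
      LTS.utraces_proj_left he hs hc.symm ⟨hma.2, hma.1⟩
        (fun x hx => LTS.Ld_swap ▸ hσ x hx) (LTS.Utraces_swap.mp hU)⟩
  · rintro ⟨hUs0, hUe0⟩
    suffices H : ∀ n (σ : List (DLabel A)), σ.length = n →
        (∀ x ∈ σ, x ∈ (s.par e).Ld) →
        LTS.proj σ s.Ld ∈ s.Utraces → LTS.proj σ e.Ld ∈ e.Utraces →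
        σ ∈ (s.par e).Utraces by
      exact H σ.length σ rfl hσ hUs0 hUe0
    clear hσ hUs0 hUe0 σ
    intro n
    induction n using Nat.strong_induction_on with
    | _ n ih =>
      intro σ hlen hσ hUs hUe
      refine ⟨hσ, ?_, ?_⟩
      · obtain ⟨P, hPs⟩ := hUs.2.1
        obtain ⟨Q, hQe⟩ := hUe.2.1
        exact ⟨(P, Q), LTS.compose_par hσ hPs hQe⟩
      · rintro σ1 a σ2 hdec haI ⟨P, Q⟩ hw
        subst hdec
        have hlt : σ1.length < n := by
          subst hlen; simp [List.length_append]
        have hσ1lab : ∀ x ∈ σ1, x ∈ (s.par e).Ld :=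
          fun x hx => hσ x (List.mem_append_left _ hx)
        have hUs1 : LTS.proj σ1 s.Ld ∈ s.Utraces :=
          LTS.Utraces_prefix (by rw [← LTS.proj_append]; exact hUs)
        have hUe1 : LTS.proj σ1 e.Ld ∈ e.Utraces :=
          LTS.Utraces_prefix (by rw [← LTS.proj_append]; exact hUe)
        have hσ1 : σ1 ∈ (s.par e).Utraces :=
          ih σ1.length hlt σ1 rfl hσ1lab hUs1 hUe1
        obtain ⟨hPs1, hQe1⟩ := LTS.decompose_par hs he hc hma hσ1 hw
        have hstep_s : a ∈ s.I → ∃ p1 p2, s.eps P p1 ∧ s.T p1 (some a) p2 := by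
          intro haIs
          obtain ⟨p', hp'⟩ := hUs.2.2 (LTS.proj σ1 s.Ld) a (LTS.proj σ2 s.Ld)
            (by rw [LTS.proj_append, LTS.proj_cons_of_mem
              (LTS.act_mem_Ld.mpr (Or.inl haIs))])
            haIs P hPs1
          obtain ⟨p1, p2, h1, h2, _⟩ := hp'
          exact ⟨p1, p2, h1, h2⟩
        have hstep_e : a ∈ e.I → ∃ q1 q2, e.eps Q q1 ∧ e.T q1 (some a) q2 := by
          intro haIe
          obtain ⟨q', hq'⟩ := hUe.2.2 (LTS.proj σ1 e.Ld) a (LTS.proj σ2 e.Ld)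
            (by rw [LTS.proj_append, LTS.proj_cons_of_mem
              (LTS.act_mem_Ld.mpr (Or.inl haIe))])
            haIe Q hQe1
          obtain ⟨q1, q2, h1, h2, _⟩ := hq'
          exact ⟨q1, q2, h1, h2⟩
        by_cases has : a ∈ s.L <;> by_cases hae : a ∈ e.L
        · -- synchronised
          have haIs : a ∈ s.I := by
            rcases haI with ⟨h1, _⟩ | ⟨h1, h2⟩
            · exact h1
            · rcases has with h | h
              · exact h
              · exact absurd h h2
          have haIe : a ∈ e.I := by
            rcases haI with ⟨h1, h2⟩ | ⟨h1, _⟩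
            · rcases hae with h | h
              · exact h
              · exact absurd h h2
            · exact h1
          obtain ⟨p1, p2, hs1, hs2⟩ := hstep_s haIs
          obtain ⟨q1, q2, he1, he2⟩ := hstep_e haIe
          exact ⟨(p2, q2), (p1, q1), (p2, q2), LTS.par_eps_mk hs1 he1,
            LTS.par_act_sync hs2 he2 has hae, Relation.ReflTransGen.refl⟩
        · have haIs : a ∈ s.I := by
            rcases haI with ⟨h1, _⟩ | ⟨h1, _⟩
            · exact h1
            · exact absurd (Or.inl h1) hae
          obtain ⟨p1, p2, hs1, hs2⟩ := hstep_s haIs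
          exact ⟨(p2, Q), (p1, Q), (p2, Q), LTS.par_eps_fst Q hs1,
            LTS.par_act_fst hs2 has hae, Relation.ReflTransGen.refl⟩
        · have haIe : a ∈ e.I := by
            rcases haI with ⟨h1, _⟩ | ⟨h1, _⟩
            · exact absurd (Or.inl h1) has
            · exact h1
          obtain ⟨q1, q2, he1, he2⟩ := hstep_e haIe
          exact ⟨(P, q2), (P, q1), (P, q2), LTS.par_eps_snd P he1,
            LTS.par_act_snd he2 hae has, Relation.ReflTransGen.refl⟩
        · rcases haI with ⟨h1, _⟩ | ⟨h1, _⟩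
          · exact absurd (Or.inl h1) has
          · exact absurd (Or.inl h1) hae
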